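/- Let J, R, Q be real n×n matrices with Jᵀ = −J, R positive semidefinite, and Q positive semidefinite, and let M denote the matrix (J − R)Q viewed as a complex n×n matrix. For λ ∈ ℂ with Re(λ) = 0ance and x ∈ ℂⁿ with x ≠ 0, the pair (λ, x) is an eigenpair of M (i.e., Mx = λx) if and only if (RQ)x = 0 and (JQ)x = λx (where RQ and JQ are viewed as complex matrices). -/

import Mathlib

open Matrix ComplexOrder

/-- The complexification of a real matrix. -/
noncomputable def toC {n : ℕ} (A : Matrix (Fin n) (Fin n) ℝ) : Matrix (Fin n) (Fin n) ℂ :=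
  A.map (fun a => (a : ℂ))

lemma toC_mul {n : ℕ} (A B : Matrix (Fin n) (Fin n) ℝ) : toC (A * B) = toC A * toC B := by
  unfold toC
  exact Matrix.map_mul (f := Complex.ofRealHom)

lemma toC_sub {n : ℕ} (A B : Matrix (Fin n) (Fin n) ℝ) : toC (A - B) = toC A - toC B := by
  ext i j; simp [toC]

lemma toC_add {n : ℕ} (A B : Matrix (Fin n) (Fin n) ℝ) : toC (A + B) = toC A + toC B := by
  ext i j; simp [toC]

lemma toC_neg {n : ℕ} (A : Matrix (Fin n) (Fin n) ℝ) : toC (-A) = -toC A := by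
  ext i j; simp [toC]

lemma toC_conjTranspose {n : ℕ} (A : Matrix (Fin n) (Fin n) ℝ) : (toC A)ᴴ = toC Aᵀ := by
  ext i j
  simp [toC, conjTranspose_apply, transpose_apply]

lemma toC_posSemidef {n : ℕ} {A : Matrix (Fin n) (Fin n) ℝ} (hA : A.PosSemidef) :
    (toC A).PosSemidef := by
  obtain ⟨B, hB⟩ : ∃ B : Matrix (Fin n) (Fin n) ℝ, A = Bᴴ * B := by
    classical
    open scoped MatrixOrder in
    obtain ⟨X, hX, -, rfl⟩ := CFC.exists_sqrt_of_isSelfAdjoint_of_quasispectrumRestricts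
      hA.isHermitian (QuasispectrumRestricts.nnreal_of_nonneg hA.nonneg)
    exact ⟨X, by change X * X = star X * X; rw [hX.star_eq]⟩
  have : toC A = (toC B)ᴴ * toC B := by
    rw [toC_conjTranspose, ← toC_mul]
    exact congrArg toC hB
  rw [this]
  exact Matrix.posSemidef_conjTranspose_mul_self _

theorem imaginary_eigenpair_iff {n : ℕ} (J R Q : Matrix (Fin n) (Fin n) ℝ)
    (hJ : Jᵀ = -J) (hR : R.PosSemidef) (hQ : Q.PosSemidef)
    (μ : ℂ) (hμ : μ.re = 0) (x : Fin n → ℂ) (hx : x ≠ 0) :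
    toC ((J - R) * Q) *ᵥ x = μ • x ↔
      (toC (R * Q) *ᵥ x = 0 ∧ toC (J * Q) *ᵥ x = μ • x) := by
  have hRC : (toC R).PosSemidef := toC_posSemidef hR
  have hQC : (toC Q).PosSemidef := toC_posSemidef hQ
  constructor
  · intro h
    set y : Fin n → ℂ := toC Q *ᵥ x with hy
    have hdecomp : toC ((J - R) * Q) *ᵥ x = toC J *ᵥ y - toC R *ᵥ y := by
      rw [toC_mul, toC_sub, sub_mul, sub_mulVec, hy, mulVec_mulVec, mulVec_mulVec]
    -- q := star y ⬝ᵥ x is real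
    have hq : star y ⬝ᵥ x = star (star x ⬝ᵥ y) := by
      rw [star_dotProduct]
    have hq_nonneg : 0 ≤ star x ⬝ᵥ y := hQC.dotProduct_mulVec_nonneg x
    have hq_im : (star y ⬝ᵥ x).im = 0 := by
      rw [hq]
      have := (Complex.nonneg_iff.mp hq_nonneg).2
      simp [Complex.star_def, ← this]
    -- the J-quadratic form is purely imaginary
    have hJskew : (toC J)ᴴ = -toC J := by
      rw [toC_conjTranspose, hJ, toC_neg]
    have hc_re : (star y ⬝ᵥ (toC J *ᵥ y)).re = 0 := by
      set c := star y ⬝ᵥ (toC J *ᵥ y) with hc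
      have h1 : (starRingEnd ℂ) c = -c := by
        rw [hc, starRingEnd_apply, ← star_dotProduct_star, star_star, star_mulVec, hJskew,
          ← dotProduct_mulVec, neg_mulVec, dotProduct_neg]
      have := congrArg Complex.re h1
      simp only [Complex.conj_re, Complex.neg_re] at this
      linarith
    -- the R-quadratic form
    have ha_nonneg : 0 ≤ star y ⬝ᵥ (toC R *ᵥ y) := hRC.dotProduct_mulVec_nonneg y
    have key : star y ⬝ᵥ (toC ((J - R) * Q) *ᵥ x) = μ * (star y ⬝ᵥ x) := by
      rw [h, dotProduct_smul, smul_eq_mul]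
    rw [hdecomp, dotProduct_sub] at key
    have hre := congrArg Complex.re key
    simp only [Complex.sub_re, Complex.mul_re, hμ, hq_im, hc_re] at hre
    have ha_re : (star y ⬝ᵥ (toC R *ᵥ y)).re = 0 := by linarith
    have ha_im : (star y ⬝ᵥ (toC R *ᵥ y)).im = 0 := (Complex.nonneg_iff.mp ha_nonneg).2.symm
    have ha0 : star y ⬝ᵥ (toC R *ᵥ y) = 0 := Complex.ext ha_re ha_im
    have hRy : toC R *ᵥ y = 0 := (hRC.dotProduct_mulVec_zero_iff y).mp ha0
    have hRQ : toC (R * Q) *ᵥ x = 0 := by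
      rw [toC_mul, ← mulVec_mulVec, ← hy, hRy]
    refine ⟨hRQ, ?_⟩
    have h3 : toC (J * Q) = toC ((J - R) * Q) + toC (R * Q) := by
      rw [← toC_add, sub_mul, sub_add_cancel]
    rw [h3, add_mulVec, h, hRQ, add_zero]
  · rintro ⟨h1, h2⟩
    have : toC ((J - R) * Q) *ᵥ x = toC (J * Q) *ᵥ x - toC (R * Q) *ᵥ x := by
      rw [← sub_mulVec, ← toC_sub, sub_mul]
    rw [this, h1, h2, sub_zero]
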